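/- arXiv:2004.08883 — 5 statements merged into one kernel-verified Lean document; each statement's English description precedes it below -/
import Mathlib

section
/- Let A be a nonempty finite set and Q : A → ℝ. For every probability mass function π on A, Σ_{a∈A} π(a)·Q(a) − Σ_{a∈A} π(a)·log(π(a)) ≤ log(Σ_{a∈A} exp(Q(a))), and equality holds if and only if π(a) = exp(Q(a)) / Σ_{a'∈A} exp(Q(a')) for every a ∈ A. -/
lemma gibbs_pointwise {x c : ℝ} (hx : 0 ≤ x) (hc : 0 < c) :
    x * (Real.log c - Real.log x) ≤ c - x ∧
    (x * (Real.log c - Real.log x) = c - x ↔ x = c) := by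
  rcases eq_or_lt_of_le hx with h0 | h0
  · refine ⟨by simpa [← h0] using hc.le, ?_⟩
    simp [← h0]
  · have hcx : 0 < c / x := div_pos hc h0
    have hlog : Real.log (c / x) = Real.log c - Real.log x :=
      Real.log_div hc.ne' h0.ne'
    have key : Real.log (c / x) ≤ c / x - 1 := Real.log_le_sub_one_of_pos hcx
    constructor
    · calc x * (Real.log c - Real.log x) = x * Real.log (c / x) := by rw [hlog]
        _ ≤ x * (c / x - 1) := by
            exact mul_le_mul_of_nonneg_left key hx
        _ = c - x := by field_simp
    · constructor
      · intro heq
        by_contra hne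
        have hne' : c / x ≠ 1 := by
          intro h1
          exact hne ((div_eq_one_iff_eq h0.ne').mp h1).symm
        have strict : Real.log (c / x) < c / x - 1 :=
          Real.log_lt_sub_one_of_pos hcx hne'
        have : x * (Real.log c - Real.log x) < c - x := by
          calc x * (Real.log c - Real.log x) = x * Real.log (c / x) := by rw [hlog]
            _ < x * (c / x - 1) := by exact mul_lt_mul_of_pos_left strict h0
            _ = c - x := by field_simp
        exact absurd heq this.ne
      · intro heq
        subst heq
        simp

/-- For a PMF `π` on a nonempty finite set `A` and `Q : A → ℝ`,
`∑ π(a) Q(a) − ∑ π(a) log π(a) ≤ log ∑ exp (Q a)`, with equality iff `π` is the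
softmax (Boltzmann) distribution of `Q`. -/
theorem maxEnt_le_logSumExp {A : Type*} [Fintype A] [Nonempty A] (Q : A → ℝ)
    (π : A → ℝ) (hπ0 : ∀ a, 0 ≤ π a) (hπ1 : ∑ a, π a = 1) :
    ((∑ a, π a * Q a) - ∑ a, π a * Real.log (π a) ≤ Real.log (∑ a, Real.exp (Q a))) ∧
    ((∑ a, π a * Q a) - ∑ a, π a * Real.log (π a) = Real.log (∑ a, Real.exp (Q a)) ↔
      ∀ a, π a = Real.exp (Q a) / ∑ a', Real.exp (Q a')) := by
  set Z : ℝ := ∑ a : A, Real.exp (Q a) with hZdef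
  have hZ : 0 < Z := Finset.sum_pos (fun a _ => Real.exp_pos _) Finset.univ_nonempty
  set p : A → ℝ := fun a => Real.exp (Q a) / Z with hpdef
  have hp : ∀ a, 0 < p a := fun a => div_pos (Real.exp_pos _) hZ
  have hlogp : ∀ a, Real.log (p a) = Q a - Real.log Z := fun a => by
    rw [hpdef]; rw [Real.log_div (Real.exp_pos _).ne' hZ.ne', Real.log_exp]
  have hpsum : ∑ a, p a = 1 := by
    rw [hpdef]
    rw [← Finset.sum_div]
    exact div_self hZ.ne'
  -- rewrite the difference
  have hrw : (∑ a, π a * Q a) - (∑ a, π a * Real.log (π a)) - Real.log Z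
      = ∑ a, π a * (Real.log (p a) - Real.log (π a)) := by
    have h1 : Real.log Z = ∑ a, π a * Real.log Z := by
      rw [← Finset.sum_mul, hπ1, one_mul]
    rw [h1, ← Finset.sum_sub_distrib, ← Finset.sum_sub_distrib]
    apply Finset.sum_congr rfl
    intro a _
    rw [hlogp a]
    ring
  have hle : ∀ a ∈ Finset.univ, π a * (Real.log (p a) - Real.log (π a)) ≤ p a - π a :=
    fun a _ => (gibbs_pointwise (hπ0 a) (hp a)).1
  have hsum0 : ∑ a, (p a - π a) = 0 := by
    rw [Finset.sum_sub_distrib, hpsum, hπ1, sub_self]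
  have hineq : (∑ a, π a * Q a) - (∑ a, π a * Real.log (π a)) ≤ Real.log Z := by
    have := Finset.sum_le_sum hle
    rw [hsum0] at this
    linarith [hrw ▸ this]
  refine ⟨hineq, ?_⟩
  constructor
  · intro heq
    have hsumeq : ∑ a, π a * (Real.log (p a) - Real.log (π a)) = ∑ a, (p a - π a) := by
      rw [← hrw, hsum0]
      linarith
    have := (Finset.sum_eq_sum_iff_of_le hle).mp hsumeq
    intro a
    exact (gibbs_pointwise (hπ0 a) (hp a)).2.mp (this a (Finset.mem_univ a))
  · intro h
    have heqsum : ∑ a, π a * (Real.log (p a) - Real.log (π a)) = ∑ a, (p a - π a) :=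
      Finset.sum_congr rfl fun a _ => (gibbs_pointwise (hπ0 a) (hp a)).2.mpr (h a)
    rw [hsum0] at heqsum
    linarith [hrw ▸ heqsum]
end

section
/- Let S and A be nonempty finite sets, T ≥ 0 a horizon, p₀ a strictly positive PMF on S (initial distribution), P(·|s,a) a strictly positive PMF on S for each (s,a) (transition), r : S × A → ℝ a reward, and for each t ∈ {0,…,T} let π_t(·|s) be a strictly positive PMF on A for each s (time-dependent policy). For a trajectory τ = (s⁰,a⁰,s¹,a¹,…,s^T,a^T,s^{T+1}) define p̂(τ) = p₀(s⁰)·Π_{t=0}^{T} P(s^{t+1}|s^t,a^t)·π_t(a^t|s^t) and p(τ) = (1/Z)·p₀(s⁰)·Π_{t=0}^{T} P(s^{t+1}|s^t,a^t)·exp(Σ_{t=0}^{T} r(s^t,a^t)), where Z = Σ_τ p₀(s⁰)·Π_t P(s^{t+1}|s^t,a^t)·exp(Σ_t r(s^t,a^t)). Then KL(p̂ ‖ p) = log Z − Σ_τ p̂(τ)·Σ_{t=0}^{T} ( r(s^t,a^t) − log π_t(a^t|s^t) ). Consequently, minimizing KL(p̂ ‖ p) over the policies π_0,…,π_T is equivalent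 to maximizing the maximum-entropy objective Σ_{t=0}^{T} E_{p̂}[ r(s^t,a^t) + H(π_t(·|s^t)) ]. -/
/-- Kullback–Leibler divergence between finitely supported distributions,
with the convention `0 · log 0 = 0` (automatic since `0 * x = 0`). -/
noncomputable def KLdiv {X : Type*} [Fintype X] (p q : X → ℝ) : ℝ :=
  ∑ x, p x * Real.log (p x / q x)

/-- The trajectory distribution `p̂` induced by the initial distribution `p0`,
transition kernel `P` and time-dependent policy `pol`:
`p̂(τ) = p0(s⁰) · ∏_t P(s^{t+1}|s^t,a^t) · π_t(a^t|s^t)`. -/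
noncomputable def trajHat {S A : Type*} [Fintype S] [Fintype A] (T : ℕ)
    (p0 : S → ℝ) (P : S → A → S → ℝ) (pol : Fin (T + 1) → S → A → ℝ) :
    (Fin (T + 2) → S) × (Fin (T + 1) → A) → ℝ :=
  fun τ => p0 (τ.1 0) * ∏ t : Fin (T + 1),
    (P (τ.1 t.castSucc) (τ.2 t) (τ.1 t.succ) * pol t (τ.1 t.castSucc) (τ.2 t))

/-- The unnormalized optimal trajectory weight
`p0(s⁰) · ∏_t P(s^{t+1}|s^t,a^t) · exp(∑_t r(s^t,a^t))`. -/
noncomputable def trajOptW {S A : Type*} [Fintype S] [Fintype A] (T : ℕ)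
    (p0 : S → ℝ) (P : S → A → S → ℝ) (r : S → A → ℝ) :
    (Fin (T + 2) → S) × (Fin (T + 1) → A) → ℝ :=
  fun τ => p0 (τ.1 0) * (∏ t : Fin (T + 1), P (τ.1 t.castSucc) (τ.2 t) (τ.1 t.succ)) *
    Real.exp (∑ t : Fin (T + 1), r (τ.1 t.castSucc) (τ.2 t))

set_option linter.unusedSectionVars false

noncomputable def chainW {S A : Type*} [Fintype S] [Fintype A] (k : ℕ)
    (P : S → A → S → ℝ) (pols : Fin k → S → A → ℝ) (s : S)
    (σ : Fin k → S) (α : Fin k → A) : ℝ :=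
  ∏ i : Fin k, (P ((Fin.cons s σ : Fin (k+1) → S) i.castSucc) (α i)
      ((Fin.cons s σ : Fin (k+1) → S) i.succ) *
    pols i ((Fin.cons s σ : Fin (k+1) → S) i.castSucc) (α i))

lemma sum_cons_equiv {X : Type*} [Fintype X] {k : ℕ} (f : (Fin (k+1) → X) → ℝ) :
    ∑ σ : Fin (k+1) → X, f σ = ∑ x : X, ∑ σ : Fin k → X, f (Fin.cons x σ) := by
  rw [← Equiv.sum_comp (Fin.consEquiv (fun _ : Fin (k+1) => X)) f,
    Fintype.sum_prod_type]
  rfl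

lemma chainW_cons {S A : Type*} [Fintype S] [Fintype A] (k : ℕ)
    (P : S → A → S → ℝ) (pols : Fin (k+1) → S → A → ℝ) (s s1 : S)
    (σ : Fin k → S) (a0 : A) (α : Fin k → A) :
    chainW (k+1) P pols s (Fin.cons s1 σ) (Fin.cons a0 α) =
      P s a0 s1 * pols 0 s a0 *
        chainW k P (fun i => pols i.succ) s1 σ α := by
  unfold chainW
  rw [Fin.prod_univ_succ]
  congr 1

lemma chainW_sum_one {S A : Type*} [Fintype S] [Fintype A] :
    ∀ (k : ℕ) (P : S → A → S → ℝ) (pols : Fin k → S → A → ℝ),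
      (∀ s a, ∑ s', P s a s' = 1) → (∀ i s, ∑ a, pols i s a = 1) →
      ∀ s : S, ∑ σ : Fin k → S, ∑ α : Fin k → A, chainW k P pols s σ α = 1
  | 0, P, pols, hP, hpols, s => by simp [chainW]
  | (k+1), P, pols, hP, hpols, s => by
    rw [sum_cons_equiv (fun σ => ∑ α : Fin (k+1) → A, chainW (k+1) P pols s σ α)]
    have key : ∀ s1 : S, ∀ σ : Fin k → S,
        ∑ α : Fin (k+1) → A, chainW (k+1) P pols s (Fin.cons s1 σ) α =
        ∑ a0 : A, ∑ α : Fin k → A,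
          P s a0 s1 * pols 0 s a0 * chainW k P (fun i => pols i.succ) s1 σ α := by
      intro s1 σ
      rw [sum_cons_equiv (fun α => chainW (k+1) P pols s (Fin.cons s1 σ) α)]
      exact Finset.sum_congr rfl fun a0 _ => Finset.sum_congr rfl fun α _ =>
        chainW_cons k P pols s s1 σ a0 α
    calc ∑ s1 : S, ∑ σ : Fin k → S, ∑ α : Fin (k+1) → A,
            chainW (k+1) P pols s (Fin.cons s1 σ) α
        = ∑ s1 : S, ∑ a0 : A, (P s a0 s1 * pols 0 s a0) *
            (∑ σ : Fin k → S, ∑ α : Fin k → A,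
              chainW k P (fun i => pols i.succ) s1 σ α) := by
          refine Finset.sum_congr rfl fun s1 _ => ?_
          simp only [key]
          rw [Finset.sum_comm]
          simp [Finset.mul_sum]
      _ = 1 := by
          simp only [chainW_sum_one k P (fun i => pols i.succ) hP (fun i => hpols i.succ)]
          simp only [mul_one]
          rw [Finset.sum_comm]
          simp [← Finset.sum_mul, hP, hpols]

lemma chainW_marginal {S A : Type*} [Fintype S] [Fintype A] :
    ∀ (k : ℕ) (P : S → A → S → ℝ) (pols : Fin k → S → A → ℝ),
      (∀ s a, ∑ s', P s a s' = 1) → (∀ i s, ∑ a, pols i s a = 1) →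
      ∀ (s : S) (t : Fin k) (f : S → A → ℝ),
      ∑ σ : Fin k → S, ∑ α : Fin k → A, chainW k P pols s σ α *
          f ((Fin.cons s σ : Fin (k+1) → S) t.castSucc) (α t)
      = ∑ σ : Fin k → S, ∑ α : Fin k → A, chainW k P pols s σ α *
          ∑ a, pols t ((Fin.cons s σ : Fin (k+1) → S) t.castSucc) a *
            f ((Fin.cons s σ : Fin (k+1) → S) t.castSucc) a
  | 0, P, pols, hP, hpols, s, t, f => t.elim0
  | (k+1), P, pols, hP, hpols, s, t, f => by
    rw [sum_cons_equiv, sum_cons_equiv]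
    have lhs1 : ∀ (s1 : S) (σ : Fin k → S),
        (∑ α : Fin (k+1) → A, chainW (k+1) P pols s (Fin.cons s1 σ) α *
          f ((Fin.cons s (Fin.cons s1 σ) : Fin (k+2) → S) t.castSucc) (α t)) =
        ∑ a0 : A, ∑ α : Fin k → A,
          (P s a0 s1 * pols 0 s a0 * chainW k P (fun i => pols i.succ) s1 σ α) *
          f ((Fin.cons s (Fin.cons s1 σ) : Fin (k+2) → S) t.castSucc)
            ((Fin.cons a0 α : Fin (k+1) → A) t) := by
      intro s1 σ
      rw [sum_cons_equiv (f := fun α => chainW (k+1) P pols s (Fin.cons s1 σ) α *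
          f ((Fin.cons s (Fin.cons s1 σ) : Fin (k+2) → S) t.castSucc) (α t))]
      exact Finset.sum_congr rfl fun a0 _ => Finset.sum_congr rfl fun α _ => by
        rw [chainW_cons]
    have rhs1 : ∀ (s1 : S) (σ : Fin k → S),
        (∑ α : Fin (k+1) → A, chainW (k+1) P pols s (Fin.cons s1 σ) α *
          ∑ a, pols t ((Fin.cons s (Fin.cons s1 σ) : Fin (k+2) → S) t.castSucc) a *
            f ((Fin.cons s (Fin.cons s1 σ) : Fin (k+2) → S) t.castSucc) a) =
        ∑ a0 : A, ∑ α : Fin k → A,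
          (P s a0 s1 * pols 0 s a0 * chainW k P (fun i => pols i.succ) s1 σ α) *
          ∑ a, pols t ((Fin.cons s (Fin.cons s1 σ) : Fin (k+2) → S) t.castSucc) a *
            f ((Fin.cons s (Fin.cons s1 σ) : Fin (k+2) → S) t.castSucc) a := by
      intro s1 σ
      rw [sum_cons_equiv (f := fun α => chainW (k+1) P pols s (Fin.cons s1 σ) α *
          ∑ a, pols t ((Fin.cons s (Fin.cons s1 σ) : Fin (k+2) → S) t.castSucc) a *
            f ((Fin.cons s (Fin.cons s1 σ) : Fin (k+2) → S) t.castSucc) a)]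
      exact Finset.sum_congr rfl fun a0 _ => Finset.sum_congr rfl fun α _ => by
        rw [chainW_cons]
    simp only [lhs1, rhs1]
    clear lhs1 rhs1
    induction t using Fin.cases with
    | zero =>
      simp only [Fin.castSucc_zero, Fin.cons_zero]
      have tail1 := chainW_sum_one k P (fun i => pols i.succ) hP
        (fun i => hpols i.succ)
      have hside : ∀ (g : A → ℝ),
          (∑ s1 : S, ∑ σ : Fin k → S, ∑ a0 : A, ∑ α : Fin k → A,
            (P s a0 s1 * pols 0 s a0 * chainW k P (fun i => pols i.succ) s1 σ α) *
              g a0)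
          = ∑ a0 : A, pols 0 s a0 * g a0 := by
        intro g
        have h1 : ∀ (s1 : S) (a0 : A),
            (∑ σ : Fin k → S, ∑ α : Fin k → A,
              (P s a0 s1 * pols 0 s a0 * chainW k P (fun i => pols i.succ) s1 σ α) *
                g a0)
            = P s a0 s1 * (pols 0 s a0 * g a0) := by
          intro s1 a0
          simp only [← Finset.sum_mul, ← Finset.mul_sum, tail1]
          ring
        calc (∑ s1 : S, ∑ σ : Fin k → S, ∑ a0 : A, ∑ α : Fin k → A,
              (P s a0 s1 * pols 0 s a0 * chainW k P (fun i => pols i.succ) s1 σ α) *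
                g a0)
            = ∑ s1 : S, ∑ a0 : A, P s a0 s1 * (pols 0 s a0 * g a0) := by
              refine Finset.sum_congr rfl fun s1 _ => ?_
              rw [Finset.sum_comm]
              exact Finset.sum_congr rfl fun a0 _ => h1 s1 a0
          _ = ∑ a0 : A, (∑ s1 : S, P s a0 s1) * (pols 0 s a0 * g a0) := by
              rw [Finset.sum_comm]
              simp [Finset.sum_mul]
          _ = ∑ a0 : A, pols 0 s a0 * g a0 := by simp [hP]
      rw [hside (fun a0 => f s a0), hside (fun _ => ∑ a, pols 0 s a * f s a)]
      rw [← Finset.sum_mul, hpols]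
      ring
    | succ j =>
      refine Finset.sum_congr rfl fun s1 _ => ?_
      have hidx : ∀ σ : Fin k → S,
          (Fin.cons s (Fin.cons s1 σ) : Fin (k+2) → S) j.succ.castSucc
          = (Fin.cons s1 σ : Fin (k+1) → S) j.castSucc := by
        intro σ
        rw [← Fin.succ_castSucc]
        simp
      simp only [hidx, Fin.cons_succ]
      rw [Finset.sum_comm]
      conv_rhs => rw [Finset.sum_comm]
      refine Finset.sum_congr rfl fun a0 _ => ?_
      simp only [mul_assoc, ← Finset.mul_sum]
      congr 1
      congr 1
      exact chainW_marginal k P (fun i => pols i.succ) hP (fun i => hpols i.succ)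
        s1 j f
  termination_by k => k

lemma trajHat_cons {S A : Type*} [Fintype S] [Fintype A] (T : ℕ)
    (p0 : S → ℝ) (P : S → A → S → ℝ) (pol : Fin (T + 1) → S → A → ℝ)
    (s : S) (σ : Fin (T+1) → S) (α : Fin (T+1) → A) :
    trajHat T p0 P pol (Fin.cons s σ, α) = p0 s * chainW (T+1) P pol s σ α := by
  rfl

lemma traj_sum_decomp {S A : Type*} [Fintype S] [Fintype A] (T : ℕ)
    (g : (Fin (T + 2) → S) × (Fin (T + 1) → A) → ℝ) :
    ∑ τ, g τ = ∑ s : S, ∑ σ : Fin (T+1) → S, ∑ α : Fin (T+1) → A,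
      g (Fin.cons s σ, α) := by
  rw [Fintype.sum_prod_type,
    sum_cons_equiv (f := fun σf => ∑ α : Fin (T+1) → A, g (σf, α))]

lemma trajHat_sum_one {S A : Type*} [Fintype S] [Fintype A] (T : ℕ)
    (p0 : S → ℝ) (hp0sum : ∑ s, p0 s = 1)
    (P : S → A → S → ℝ) (hPsum : ∀ s a, ∑ s', P s a s' = 1)
    (pol : Fin (T + 1) → S → A → ℝ) (hpolsum : ∀ t s, ∑ a, pol t s a = 1) :
    ∑ τ, trajHat T p0 P pol τ = 1 := by
  rw [traj_sum_decomp]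
  simp only [trajHat_cons, ← Finset.mul_sum,
    chainW_sum_one (T+1) P pol hPsum hpolsum]
  simpa using hp0sum

lemma trajHat_marginal {S A : Type*} [Fintype S] [Fintype A] (T : ℕ)
    (p0 : S → ℝ) (P : S → A → S → ℝ) (hPsum : ∀ s a, ∑ s', P s a s' = 1)
    (pol : Fin (T + 1) → S → A → ℝ) (hpolsum : ∀ t s, ∑ a, pol t s a = 1)
    (t : Fin (T+1)) (f : S → A → ℝ) :
    ∑ τ, trajHat T p0 P pol τ * f (τ.1 t.castSucc) (τ.2 t)
    = ∑ τ, trajHat T p0 P pol τ *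
        ∑ a, pol t (τ.1 t.castSucc) a * f (τ.1 t.castSucc) a := by
  rw [traj_sum_decomp, traj_sum_decomp]
  refine Finset.sum_congr rfl fun s _ => ?_
  simp only [trajHat_cons, mul_assoc, ← Finset.mul_sum]
  congr 1
  exact chainW_marginal (T+1) P pol hPsum hpolsum s t f

section KL
variable {S A : Type*} [Fintype S] [Fintype A] [Nonempty S] [Nonempty A] (T : ℕ)
  (p0 : S → ℝ) (P : S → A → S → ℝ) (r : S → A → ℝ)

lemma trajOptW_pos (hp0 : ∀ s, 0 < p0 s) (hP : ∀ s a s', 0 < P s a s')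
    (τ : (Fin (T + 2) → S) × (Fin (T + 1) → A)) : 0 < trajOptW T p0 P r τ := by
  refine mul_pos (mul_pos (hp0 _) ?_) (Real.exp_pos _)
  exact Finset.prod_pos fun i _ => hP _ _ _

lemma Z_pos (hp0 : ∀ s, 0 < p0 s) (hP : ∀ s a s', 0 < P s a s') :
    0 < ∑ τ', trajOptW T p0 P r τ' :=
  Finset.sum_pos (fun τ _ => trajOptW_pos T p0 P r hp0 hP τ) Finset.univ_nonempty

lemma KL_formula (hp0 : ∀ s, 0 < p0 s) (hp0sum : ∑ s, p0 s = 1)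
    (hP : ∀ s a s', 0 < P s a s') (hPsum : ∀ s a, ∑ s', P s a s' = 1)
    (pol : Fin (T + 1) → S → A → ℝ) (hpol : ∀ t s a, 0 < pol t s a)
    (hpolsum : ∀ t s, ∑ a, pol t s a = 1) :
    KLdiv (trajHat T p0 P pol)
        (fun τ => trajOptW T p0 P r τ / ∑ τ', trajOptW T p0 P r τ') =
      Real.log (∑ τ', trajOptW T p0 P r τ') -
        ∑ τ, trajHat T p0 P pol τ *
          ∑ t : Fin (T + 1),
            (r (τ.1 t.castSucc) (τ.2 t) - Real.log (pol t (τ.1 t.castSucc) (τ.2 t))) := by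
  have hZ := Z_pos T p0 P r hp0 hP
  set Z := ∑ τ', trajOptW T p0 P r τ' with hZdef
  have hptwise : ∀ τ : (Fin (T + 2) → S) × (Fin (T + 1) → A),
      Real.log (trajHat T p0 P pol τ / (trajOptW T p0 P r τ / Z)) =
      Real.log Z - ∑ t : Fin (T + 1),
        (r (τ.1 t.castSucc) (τ.2 t) - Real.log (pol t (τ.1 t.castSucc) (τ.2 t))) := by
    intro τ
    have hc : (0:ℝ) < p0 (τ.1 0) * ∏ t : Fin (T + 1), P (τ.1 t.castSucc) (τ.2 t) (τ.1 t.succ) :=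
      mul_pos (hp0 _) (Finset.prod_pos fun i _ => hP _ _ _)
    have hQ : (0:ℝ) < ∏ t : Fin (T + 1), pol t (τ.1 t.castSucc) (τ.2 t) :=
      Finset.prod_pos fun i _ => hpol _ _ _
    have hhat : trajHat T p0 P pol τ =
        (p0 (τ.1 0) * ∏ t : Fin (T + 1), P (τ.1 t.castSucc) (τ.2 t) (τ.1 t.succ)) *
          ∏ t : Fin (T + 1), pol t (τ.1 t.castSucc) (τ.2 t) := by
      rw [trajHat, Finset.prod_mul_distrib, mul_assoc]
    have hw : trajOptW T p0 P r τ =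
        (p0 (τ.1 0) * ∏ t : Fin (T + 1), P (τ.1 t.castSucc) (τ.2 t) (τ.1 t.succ)) *
          Real.exp (∑ t : Fin (T + 1), r (τ.1 t.castSucc) (τ.2 t)) := rfl
    rw [hhat, hw]
    rw [show (p0 (τ.1 0) * ∏ t : Fin (T + 1), P (τ.1 t.castSucc) (τ.2 t) (τ.1 t.succ)) *
          (∏ t : Fin (T + 1), pol t (τ.1 t.castSucc) (τ.2 t)) /
        ((p0 (τ.1 0) * ∏ t : Fin (T + 1), P (τ.1 t.castSucc) (τ.2 t) (τ.1 t.succ)) *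
          Real.exp (∑ t : Fin (T + 1), r (τ.1 t.castSucc) (τ.2 t)) / Z) =
        (∏ t : Fin (T + 1), pol t (τ.1 t.castSucc) (τ.2 t)) * Z /
          Real.exp (∑ t : Fin (T + 1), r (τ.1 t.castSucc) (τ.2 t)) by
      have h1 := (hp0 (τ.1 0)).ne'
      have h2 : (∏ t : Fin (T + 1), P (τ.1 t.castSucc) (τ.2 t) (τ.1 t.succ)) ≠ 0 :=
        (Finset.prod_pos fun i _ => hP _ _ _).ne'
      field_simp]
    rw [Real.log_div (by positivity) (by positivity), Real.log_mul (ne_of_gt hQ) (ne_of_gt hZ),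
      Real.log_exp, Real.log_prod (fun i _ => ne_of_gt (hpol _ _ _)),
      Finset.sum_sub_distrib]
    ring
  unfold KLdiv
  calc (∑ τ, trajHat T p0 P pol τ *
        Real.log (trajHat T p0 P pol τ / (trajOptW T p0 P r τ / Z)))
      = ∑ τ, (trajHat T p0 P pol τ * Real.log Z - trajHat T p0 P pol τ *
          ∑ t : Fin (T + 1),
            (r (τ.1 t.castSucc) (τ.2 t) - Real.log (pol t (τ.1 t.castSucc) (τ.2 t)))) := by
        refine Finset.sum_congr rfl fun τ _ => ?_
        rw [hptwise τ]; ring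
    _ = Real.log Z - ∑ τ, trajHat T p0 P pol τ *
          ∑ t : Fin (T + 1),
            (r (τ.1 t.castSucc) (τ.2 t) - Real.log (pol t (τ.1 t.castSucc) (τ.2 t))) := by
        rw [Finset.sum_sub_distrib, ← Finset.sum_mul,
          trajHat_sum_one T p0 hp0sum P hPsum pol hpolsum, one_mul]

lemma F_eq_obj (hPsum : ∀ s a, ∑ s', P s a s' = 1)
    (pol : Fin (T + 1) → S → A → ℝ) (hpolsum : ∀ t s, ∑ a, pol t s a = 1) :
    ∑ τ, trajHat T p0 P pol τ *
        ∑ t : Fin (T + 1),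
          (r (τ.1 t.castSucc) (τ.2 t) - Real.log (pol t (τ.1 t.castSucc) (τ.2 t)))
    = ∑ t : Fin (T + 1), ∑ τ, trajHat T p0 P pol τ *
        (r (τ.1 t.castSucc) (τ.2 t) -
          ∑ a, pol t (τ.1 t.castSucc) a * Real.log (pol t (τ.1 t.castSucc) a)) := by
  simp only [Finset.mul_sum]
  rw [Finset.sum_comm]
  refine Finset.sum_congr rfl fun t _ => ?_
  simp only [mul_sub]
  rw [Finset.sum_sub_distrib, Finset.sum_sub_distrib]
  congr 1
  exact trajHat_marginal T p0 P hPsum pol hpolsum t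
    (fun s a => Real.log (pol t s a))
end KL

/-- `KL(p̂ ‖ p) = log Z − ∑_τ p̂(τ) ∑_t (r(s^t,a^t) − log π_t(a^t|s^t))`;
consequently minimizing `KL(p̂ ‖ p)` over policies is equivalent to maximizing the
maximum-entropy objective `∑_t E_{p̂}[ r(s^t,a^t) + H(π_t(·|s^t)) ]`. -/
theorem trajectory_KL_eq_maxEnt {S A : Type*} [Fintype S] [Fintype A]
    [Nonempty S] [Nonempty A] (T : ℕ)
    (p0 : S → ℝ) (hp0 : ∀ s, 0 < p0 s) (hp0sum : ∑ s, p0 s = 1)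
    (P : S → A → S → ℝ) (hP : ∀ s a s', 0 < P s a s')
    (hPsum : ∀ s a, ∑ s', P s a s' = 1)
    (r : S → A → ℝ)
    (pol : Fin (T + 1) → S → A → ℝ) (hpol : ∀ t s a, 0 < pol t s a)
    (hpolsum : ∀ t s, ∑ a, pol t s a = 1) :
    (KLdiv (trajHat T p0 P pol)
        (fun τ => trajOptW T p0 P r τ / ∑ τ', trajOptW T p0 P r τ') =
      Real.log (∑ τ', trajOptW T p0 P r τ') -
        ∑ τ, trajHat T p0 P pol τ *
          ∑ t : Fin (T + 1),
            (r (τ.1 t.castSucc) (τ.2 t) - Real.log (pol t (τ.1 t.castSucc) (τ.2 t)))) ∧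
    (∀ pol' : Fin (T + 1) → S → A → ℝ, (∀ t s a, 0 < pol' t s a) →
      (∀ t s, ∑ a, pol' t s a = 1) →
      (KLdiv (trajHat T p0 P pol)
          (fun τ => trajOptW T p0 P r τ / ∑ τ', trajOptW T p0 P r τ') ≤
        KLdiv (trajHat T p0 P pol')
          (fun τ => trajOptW T p0 P r τ / ∑ τ', trajOptW T p0 P r τ') ↔
      (∑ t : Fin (T + 1), ∑ τ, trajHat T p0 P pol' τ *
          (r (τ.1 t.castSucc) (τ.2 t) -
            ∑ a, pol' t (τ.1 t.castSucc) a * Real.log (pol' t (τ.1 t.castSucc) a))) ≤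
      (∑ t : Fin (T + 1), ∑ τ, trajHat T p0 P pol τ *
          (r (τ.1 t.castSucc) (τ.2 t) -
            ∑ a, pol t (τ.1 t.castSucc) a * Real.log (pol t (τ.1 t.castSucc) a))))) := by
  have hZ := Z_pos T p0 P r hp0 hP
  constructor
  · exact KL_formula T p0 P r hp0 hp0sum hP hPsum pol hpol hpolsum
  · intro pol' hpol' hpolsum'
    rw [KL_formula T p0 P r hp0 hp0sum hP hPsum pol hpol hpolsum,
      KL_formula T p0 P r hp0 hp0sum hP hPsum pol' hpol' hpolsum',
      F_eq_obj T p0 P r hPsum pol hpolsum, F_eq_obj T p0 P r hPsum pol' hpolsum']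
    exact sub_le_sub_iff_left _
end

section
/- Let A_1, …, A_N be nonempty finite sets, let π be a strictly positive PMF on the product Π_{j=1}^N A_j, fix an index i, and fix strictly positive PMFs q_j on A_j for every j ≠ i. Define g(a_i) = Σ_{a_{-i}} (Π_{j≠i} q_j(a_j)) · log π(a_i, a_{-i}), where a_{-i} ranges over Π_{j≠i} A_j. Then, over all PMFs p_i on A_i, the Kullback–Leibler divergence KL( p_i ⊗ (⊗_{j≠i} q_j) ‖ π ) is uniquely minimized at q_i*(a_i) = exp(g(a_i)) / Σ_{a_i'∈A_i} exp(g(a_i')). -/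
/-- Combine a value `x : A i` with values `c` at all coordinates `j ≠ i`
into a full configuration `(a_i, a_{-i})`. -/
def combine {N : ℕ} {A : Fin N → Type*} (i : Fin N) (x : A i)
    (c : ∀ j : {j : Fin N // j ≠ i}, A j.1) : ∀ j, A j :=
  fun j => if h : j = i then cast (congrArg A h.symm) x else c ⟨j, h⟩

/-- `g(a_i) = ∑_{a_{-i}} (∏_{j≠i} q_j(a_j)) · log π(a_i, a_{-i})`. -/
noncomputable def mfG {N : ℕ} {A : Fin N → Type*} [∀ j, Fintype (A j)]
    (π : (∀ j, A j) → ℝ) (i : Fin N) (q : ∀ j, A j → ℝ) : A i → ℝ :=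
  fun x => ∑ c : ∀ j : {j : Fin N // j ≠ i}, A j.1,
    (∏ j : {j : Fin N // j ≠ i}, q j.1 (c j)) * Real.log (π (combine i x c))

/-- The mean-field coordinate update `q_i*(a_i) = exp(g(a_i)) / ∑_{a_i'} exp(g(a_i'))`. -/
noncomputable def mfStar {N : ℕ} {A : Fin N → Type*} [∀ j, Fintype (A j)]
    (π : (∀ j, A j) → ℝ) (i : Fin N) (q : ∀ j, A j → ℝ) : A i → ℝ :=
  fun x => Real.exp (mfG π i q x) / ∑ x', Real.exp (mfG π i q x')

lemma gibbs_term (p q : ℝ) (hp : 0 ≤ p) (hq : 0 < q) :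
    p - q ≤ p * Real.log (p / q) ∧
    (p * Real.log (p / q) = p - q → p = q) := by
  rcases eq_or_lt_of_le hp with h0 | h0
  · refine ⟨?_, ?_⟩
    · rw [← h0]; simp; linarith
    · rw [← h0]; intro h; simp at h; linarith
  · have hd : 0 < q / p := div_pos hq h0
    have hlog := Real.log_le_sub_one_of_pos hd
    have hlq : Real.log (q / p) = Real.log q - Real.log p := Real.log_div hq.ne' h0.ne'
    have hlp : Real.log (p / q) = Real.log p - Real.log q := Real.log_div h0.ne' hq.ne'
    have hqp : p * (q / p) = q := by field_simp
    constructor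
    · nlinarith [mul_le_mul_of_nonneg_left hlog h0.le]
    · intro heq
      by_contra hne
      have hne1 : q / p ≠ 1 := by
        intro h1
        exact hne ((div_eq_one_iff_eq h0.ne').mp h1).symm
      have := Real.log_lt_sub_one_of_pos hd hne1
      nlinarith [mul_lt_mul_of_pos_left this h0]

lemma gibbs {X : Type*} [Fintype X] (p q : X → ℝ) (hp : ∀ x, 0 ≤ p x)
    (hq : ∀ x, 0 < q x) (hps : ∑ x, p x = 1) (hqs : ∑ x, q x = 1) :
    0 ≤ ∑ x, p x * Real.log (p x / q x) ∧
    ((∑ x, p x * Real.log (p x / q x)) = 0 → p = q) := by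
  set f : X → ℝ := fun x => p x * Real.log (p x / q x) - (p x - q x) with hf
  have hf0 : ∀ x ∈ Finset.univ, 0 ≤ f x := fun x _ => by
    have := (gibbs_term (p x) (q x) (hp x) (hq x)).1; simp [hf]; linarith
  have hsum : ∑ x, f x = ∑ x, p x * Real.log (p x / q x) := by
    simp [hf, Finset.sum_sub_distrib, hps, hqs]
  constructor
  · rw [← hsum]; exact Finset.sum_nonneg hf0
  · intro h
    have hz : ∑ x ∈ Finset.univ, f x = 0 := by rw [hsum, h]
    have := (Finset.sum_eq_zero_iff_of_nonneg hf0).mp hz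
    funext x
    have hx : f x = 0 := this x (Finset.mem_univ x)
    exact (gibbs_term (p x) (q x) (hp x) (hq x)).2 (by simp [hf] at hx; linarith)

lemma combine_eq_piSplitAt_symm {N : ℕ} {A : Fin N → Type*} (i : Fin N) (x : A i)
    (c : ∀ j : {j : Fin N // j ≠ i}, A j.1) :
    combine i x c = (Equiv.piSplitAt i A).symm (x, c) := by
  funext j
  simp only [combine, Equiv.piSplitAt, Equiv.coe_fn_symm_mk]
  split
  · next h => subst h; rfl
  · rfl

lemma combine_apply_self {N : ℕ} {A : Fin N → Type*} (i : Fin N) (x : A i)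
    (c : ∀ j : {j : Fin N // j ≠ i}, A j.1) : combine i x c i = x := by
  simp [combine]

lemma combine_apply_ne {N : ℕ} {A : Fin N → Type*} (i : Fin N) (x : A i)
    (c : ∀ j : {j : Fin N // j ≠ i}, A j.1) (j : {j : Fin N // j ≠ i}) :
    combine i x c j.1 = c j := by
  simp only [combine, dif_neg j.2]

section decomp

variable {N : ℕ} {A : Fin N → Type*} [∀ j, Fintype (A j)] [∀ j, Nonempty (A j)]
    (π : (∀ j, A j) → ℝ) (i : Fin N) (q : ∀ j, A j → ℝ)

lemma mfDecomp (hπ : ∀ a, 0 < π a)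
    (hq : ∀ j, j ≠ i → ∀ x, 0 < q j x) (hqsum : ∀ j, j ≠ i → ∑ x, q j x = 1)
    (p : A i → ℝ) (hp : ∀ x, 0 ≤ p x) (hpsum : ∑ x, p x = 1) :
    KLdiv (fun a => p (a i) * ∏ j ∈ Finset.univ.erase i, q j (a j)) π =
      (∑ x, p x * Real.log (p x / mfStar π i q x))
        - Real.log (∑ x', Real.exp (mfG π i q x'))
        + ∑ c : ∀ j : {j : Fin N // j ≠ i}, A j.1,
            (∏ j : {j : Fin N // j ≠ i}, q j.1 (c j)) *
              Real.log (∏ j : {j : Fin N // j ≠ i}, q j.1 (c j)) := by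
  set Q : (∀ j : {j : Fin N // j ≠ i}, A j.1) → ℝ :=
    fun c => ∏ j : {j : Fin N // j ≠ i}, q j.1 (c j) with hQ
  have hQpos : ∀ c, 0 < Q c := fun c =>
    Finset.prod_pos fun j _ => hq j.1 j.2 (c j)
  have hQsum : ∑ c, Q c = 1 := by
    rw [hQ, ← Fintype.piFinset_univ, ← Finset.prod_univ_sum]
    exact Finset.prod_eq_one fun j _ => hqsum j.1 j.2
  set Z : ℝ := ∑ x', Real.exp (mfG π i q x') with hZdef
  have hZ : 0 < Z := Finset.sum_pos (fun x _ => Real.exp_pos _) Finset.univ_nonempty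
  have hstarpos : ∀ x, 0 < mfStar π i q x := fun x => div_pos (Real.exp_pos _) hZ
  set F : (∀ j, A j) → ℝ := fun a => p (a i) * ∏ j ∈ Finset.univ.erase i, q j (a j) with hFdef
  have hF : ∀ x c, F (combine i x c) = p x * Q c := by
    intro x c
    rw [hFdef]
    simp only
    rw [combine_apply_self]
    congr 1
    rw [Finset.prod_subtype (p := fun j => j ≠ i) (Finset.univ.erase i)
      (fun j => by simp [Finset.mem_erase]) (fun j => q j (combine i x c j))]
    exact Finset.prod_congr rfl fun j _ => by rw [combine_apply_ne]
  have hKL : KLdiv F π =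
      ∑ x, ∑ c, (p x * Q c) * Real.log ((p x * Q c) / π (combine i x c)) := by
    unfold KLdiv
    rw [← Equiv.sum_comp (Equiv.piSplitAt i A).symm
      (fun a => F a * Real.log (F a / π a)), Fintype.sum_prod_type]
    refine Finset.sum_congr rfl fun x _ => Finset.sum_congr rfl fun c _ => ?_
    rw [← combine_eq_piSplitAt_symm, hF]
  set CQ : ℝ := ∑ c, Q c * Real.log (Q c) with hCQ
  have hinner : ∀ x, ∑ c, (p x * Q c) * Real.log ((p x * Q c) / π (combine i x c)) =
      p x * Real.log (p x / mfStar π i q x) - p x * Real.log Z + p x * CQ := by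
    intro x
    rcases eq_or_lt_of_le (hp x) with h0 | h0
    · rw [← h0]; simp
    · have hterm : ∀ c, (p x * Q c) * Real.log ((p x * Q c) / π (combine i x c)) =
          Q c * (p x * Real.log (p x)) + p x * (Q c * Real.log (Q c))
            - p x * (Q c * Real.log (π (combine i x c))) := by
        intro c
        rw [Real.log_div (mul_pos h0 (hQpos c)).ne' (hπ _).ne',
          Real.log_mul h0.ne' (hQpos c).ne']
        ring
      rw [Finset.sum_congr rfl fun c _ => hterm c]
      rw [Finset.sum_sub_distrib, Finset.sum_add_distrib, ← Finset.sum_mul,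
        ← Finset.mul_sum, ← Finset.mul_sum, hQsum, one_mul]
      have hg : ∑ c, Q c * Real.log (π (combine i x c)) = mfG π i q x := rfl
      rw [hg]
      have hstar : Real.log (mfStar π i q x) = mfG π i q x - Real.log Z := by
        unfold mfStar
        rw [Real.log_div (Real.exp_ne_zero _) hZ.ne', Real.log_exp]
      have hdiv : Real.log (p x / mfStar π i q x)
          = Real.log (p x) - (mfG π i q x - Real.log Z) := by
        rw [Real.log_div h0.ne' (hstarpos x).ne', hstar]
      rw [hdiv]
      ring
  rw [hKL, Finset.sum_congr rfl fun x _ => hinner x]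
  rw [Finset.sum_add_distrib, Finset.sum_sub_distrib, ← Finset.sum_mul, ← Finset.sum_mul,
    hpsum, one_mul, one_mul]

end decomp

/-- With `q_j` (`j ≠ i`) fixed strictly positive PMFs, the KL divergence
`KL( p_i ⊗ (⊗_{j≠i} q_j) ‖ π )` over PMFs `p_i` on `A i` is uniquely minimized at
`q_i*(a_i) = exp(g(a_i)) / ∑_{a_i'} exp(g(a_i'))`. -/
theorem meanField_coordinate_update {N : ℕ} (A : Fin N → Type*)
    [∀ j, Fintype (A j)] [∀ j, Nonempty (A j)]
    (π : (∀ j, A j) → ℝ) (hπ : ∀ a, 0 < π a) (hπsum : ∑ a, π a = 1)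
    (i : Fin N) (q : ∀ j, A j → ℝ)
    (hq : ∀ j, j ≠ i → ∀ x, 0 < q j x) (hqsum : ∀ j, j ≠ i → ∑ x, q j x = 1) :
    ∀ p : A i → ℝ, (∀ x, 0 ≤ p x) → (∑ x, p x = 1) →
      (KLdiv (fun a => mfStar π i q (a i) * ∏ j ∈ Finset.univ.erase i, q j (a j)) π ≤
        KLdiv (fun a => p (a i) * ∏ j ∈ Finset.univ.erase i, q j (a j)) π) ∧
      (KLdiv (fun a => p (a i) * ∏ j ∈ Finset.univ.erase i, q j (a j)) π =
        KLdiv (fun a => mfStar π i q (a i) * ∏ j ∈ Finset.univ.erase i, q j (a j)) π →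
        p = mfStar π i q) := by
  intro p hp hpsum
  have hZ : 0 < ∑ x', Real.exp (mfG π i q x') :=
    Finset.sum_pos (fun x _ => Real.exp_pos _) Finset.univ_nonempty
  have hstarpos : ∀ x, 0 < mfStar π i q x := fun x => div_pos (Real.exp_pos _) hZ
  have hstarsum : ∑ x, mfStar π i q x = 1 := by
    unfold mfStar
    rw [← Finset.sum_div, div_self hZ.ne']
  have hdecp := mfDecomp π i q hπ hq hqsum p hp hpsum
  have hdecs := mfDecomp π i q hπ hq hqsum (mfStar π i q) (fun x => (hstarpos x).le) hstarsum
  have hstar0 : ∑ x, mfStar π i q x * Real.log (mfStar π i q x / mfStar π i q x) = 0 := by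
    refine Finset.sum_eq_zero fun x _ => ?_
    rw [div_self (hstarpos x).ne', Real.log_one, mul_zero]
  have hG := gibbs p (mfStar π i q) hp hstarpos hpsum hstarsum
  constructor
  · rw [hdecp, hdecs, hstar0]; linarith [hG.1]
  · intro h
    rw [hdecp, hdecs, hstar0] at h
    exact hG.2 (by linarith)
end

section
/- Let A_1,…,A_N be nonempty finite sets and let π be a strictly positive PMF on Π_{j=1}^N A_j. Suppose the tuple (q_1,…,q_N) of strictly positive PMFs minimizes KL( ⊗_{j=1}^N q_j ‖ π ) over all tuples of PMFs on A_1,…,A_N. Then for every index i, q_i(a_i) = exp(g_i(a_i)) / Σ_{a_i'} exp(g_i(a_i')), where g_i(a_i) = Σ_{a_{-i}} (Π_{j≠i} q_j(a_j)) · log π(a_i, a_{-i}); that is, any mean-field optimum simultaneously satisfies the fixed-point equations q_i ∝ exp E_{⊗_{j≠i} q_j}[ log π ] for all i. -/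
section Aux
variable {N : ℕ} {A : Fin N → Type*} [∀ j, Fintype (A j)]

lemma combine_same (i : Fin N) (x : A i) (c : ∀ j : {j : Fin N // j ≠ i}, A j.1) :
    combine i x c i = x := by simp [combine]

lemma combine_ne (i : Fin N) (x : A i) (c : ∀ j : {j : Fin N // j ≠ i}, A j.1)
    (j : Fin N) (h : j ≠ i) : combine i x c j = c ⟨j, h⟩ := by simp [combine, h]

lemma sum_combine (i : Fin N) (f : (∀ j, A j) → ℝ) :
    ∑ a, f a = ∑ x : A i, ∑ c : ∀ j : {j : Fin N // j ≠ i}, A j.1, f (combine i x c) := by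
  have h2 := Fintype.sum_prod_type
    (f := fun p : A i × (∀ j : {j : Fin N // j ≠ i}, A j.1) => f (combine i p.1 p.2))
  rw [← h2]
  apply Fintype.sum_equiv (Equiv.piSplitAt i A)
  intro a
  congr 1
  funext j
  simp only [combine, Equiv.piSplitAt_apply]
  split_ifs with h
  · subst h; rfl
  · rfl

lemma prod_combine (i : Fin N) (f : ∀ j, A j → ℝ) (x : A i)
    (c : ∀ j : {j : Fin N // j ≠ i}, A j.1) :
    ∏ j, f j (combine i x c j) = f i x * ∏ j : {j : Fin N // j ≠ i}, f j.1 (c j) := by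
  rw [← Finset.mul_prod_erase Finset.univ _ (Finset.mem_univ i), combine_same]
  congr 1
  rw [Finset.prod_subtype (p := fun j => j ≠ i) (Finset.univ.erase i) (fun j => by simp)
    (fun j => f j (combine i x c j))]
  exact Finset.prod_congr rfl fun j _ => by rw [combine_ne i x c j.1 j.2]

end Aux

/-- Any tuple of strictly positive PMFs `(q_1,…,q_N)` minimizing
`KL(⊗_j q_j ‖ π)` over all tuples of PMFs simultaneously satisfies the mean-field
fixed-point equations `q_i ∝ exp E_{⊗_{j≠i} q_j}[log π]` for every `i`. -/
theorem meanField_optimum_is_fixed_point {N : ℕ} (A : Fin N → Type*)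
    [∀ j, Fintype (A j)] [∀ j, Nonempty (A j)]
    (π : (∀ j, A j) → ℝ) (hπ : ∀ a, 0 < π a) (hπsum : ∑ a, π a = 1)
    (q : ∀ j, A j → ℝ) (hq : ∀ j x, 0 < q j x) (hqsum : ∀ j, ∑ x, q j x = 1)
    (hmin : ∀ q' : ∀ j, A j → ℝ, (∀ j x, 0 ≤ q' j x) → (∀ j, ∑ x, q' j x = 1) →
      KLdiv (fun a => ∏ j, q j (a j)) π ≤ KLdiv (fun a => ∏ j, q' j (a j)) π) :
    ∀ i (x : A i), q i x = Real.exp (mfG π i q x) / ∑ x', Real.exp (mfG π i q x') := by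
  intro i
  -- notation
  set g : A i → ℝ := mfG π i q with hg
  set Z : ℝ := ∑ x', Real.exp (g x') with hZ
  set s : A i → ℝ := mfStar π i q with hs
  have hZpos : 0 < Z := Finset.sum_pos (fun x _ => Real.exp_pos _) Finset.univ_nonempty
  have hspos : ∀ x, 0 < s x := fun x => div_pos (Real.exp_pos _) hZpos
  have hssum : ∑ x, s x = 1 := by
    rw [hs]; unfold mfStar
    rw [← Finset.sum_div, ← hg, ← hZ, div_self hZpos.ne']
  have hlogs : ∀ x, Real.log (s x) = g x - Real.log Z := fun x => by
    rw [hs]; unfold mfStar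
    rw [← hg, ← hZ, Real.log_div (Real.exp_ne_zero _) hZpos.ne', Real.log_exp]
  -- context product
  set P : (∀ j : {j : Fin N // j ≠ i}, A j.1) → ℝ := fun c => ∏ j, q j.1 (c j) with hPdef
  have hPpos : ∀ c, 0 < P c := fun c => Finset.prod_pos fun j _ => hq j.1 _
  have hPsum : ∑ c, P c = 1 := by
    rw [hPdef, ← Fintype.piFinset_univ, ← Finset.prod_univ_sum]
    exact Finset.prod_eq_one fun j _ => hqsum j.1
  set C : ℝ := ∑ c, P c * Real.log (P c) with hC
  -- mfG in terms of P
  have hgP : ∀ x, g x = ∑ c, P c * Real.log (π (combine i x c)) := fun x => rfl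
  -- key decomposition
  have key : ∀ r : A i → ℝ, (∀ x, 0 < r x) → (∑ x, r x = 1) →
      KLdiv (fun a => ∏ j, Function.update q i r j (a j)) π
        = (∑ x, r x * Real.log (r x) - ∑ x, r x * g x) + C := by
    intro r hr hrsum
    have hupd : ∀ (j : {j : Fin N // j ≠ i}) (y : A j.1),
        Function.update q i r j.1 y = q j.1 y := fun j y => by
      rw [Function.update_of_ne j.2]
    unfold KLdiv
    rw [sum_combine i]
    have inner : ∀ x : A i,
        (∑ c, (∏ j, Function.update q i r j (combine i x c j)) *
          Real.log ((∏ j, Function.update q i r j (combine i x c j)) / π (combine i x c)))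
        = r x * Real.log (r x) + r x * C - r x * g x := by
      intro x
      have h1 : ∀ c, (∏ j, Function.update q i r j (combine i x c j)) = r x * P c := by
        intro c
        rw [prod_combine i (Function.update q i r) x c, Function.update_self]
        congr 1
        exact Finset.prod_congr rfl fun j _ => hupd j _
      have h2 : ∀ c ∈ Finset.univ,
          (∏ j, Function.update q i r j (combine i x c j)) *
            Real.log ((∏ j, Function.update q i r j (combine i x c j)) / π (combine i x c))
          = r x * Real.log (r x) * P c + r x * (P c * Real.log (P c))
            - r x * (P c * Real.log (π (combine i x c))) := by
        intro c _
        rw [h1 c, Real.log_div (mul_pos (hr x) (hPpos c)).ne' (hπ _).ne',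
          Real.log_mul (hr x).ne' (hPpos c).ne']
        ring
      rw [Finset.sum_congr rfl h2, Finset.sum_sub_distrib, Finset.sum_add_distrib,
        ← Finset.mul_sum, ← Finset.mul_sum, ← Finset.mul_sum, hPsum, ← hC, ← hgP x]
      ring
    rw [Finset.sum_congr rfl (fun x _ => inner x), Finset.sum_sub_distrib,
      Finset.sum_add_distrib, ← Finset.sum_mul, hrsum]
    ring
  -- compare optimum with the mean-field update
  have hupd_nonneg : ∀ j y, 0 ≤ Function.update q i s j y := by
    intro j y
    rcases eq_or_ne j i with h | h
    · subst h; rw [Function.update_self]; exact (hspos y).le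
    · rw [Function.update_of_ne h]; exact (hq j y).le
  have hupd_sum : ∀ j, ∑ y, Function.update q i s j y = 1 := by
    intro j
    rcases eq_or_ne j i with h | h
    · subst h; rw [Function.update_self]; exact hssum
    · rw [Function.update_of_ne h]; exact hqsum j
  have hle := hmin (Function.update q i s) hupd_nonneg hupd_sum
  have e1 : KLdiv (fun a => ∏ j, q j (a j)) π
      = (∑ x, q i x * Real.log (q i x) - ∑ x, q i x * g x) + C := by
    have h := key (q i) (hq i) (hqsum i)
    rwa [Function.update_eq_self] at h
  have e2 := key s hspos hssum
  rw [e1, e2] at hle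
  -- translate into KL(q_i ‖ s) ≤ 0
  have Dform : ∀ r : A i → ℝ, (∀ x, 0 < r x) → (∑ x, r x = 1) →
      (∑ x, r x * Real.log (r x / s x))
        = (∑ x, r x * Real.log (r x) - ∑ x, r x * g x) + Real.log Z := by
    intro r hr hrsum
    have h : ∀ x ∈ Finset.univ, r x * Real.log (r x / s x)
        = r x * Real.log (r x) - r x * g x + r x * Real.log Z := by
      intro x _
      rw [Real.log_div (hr x).ne' (hspos x).ne', hlogs x]
      ring
    rw [Finset.sum_congr rfl h, Finset.sum_add_distrib, Finset.sum_sub_distrib,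
      ← Finset.sum_mul, hrsum, one_mul]
  have hDq : (∑ x, q i x * Real.log (q i x / s x)) ≤ ∑ x, s x * Real.log (s x / s x) := by
    rw [Dform (q i) (hq i) (hqsum i), Dform s hspos hssum]
    linarith
  have hDs : (∑ x, s x * Real.log (s x / s x)) = 0 := by
    apply Finset.sum_eq_zero
    intro x _
    rw [div_self (hspos x).ne', Real.log_one, mul_zero]
  rw [hDs] at hDq
  -- Gibbs: conclude q i = s
  intro x
  show q i x = s x
  by_contra hne
  have hterm : ∀ y, q i y * Real.log (s y / q i y) ≤ s y - q i y := by
    intro y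
    have h1 := Real.log_le_sub_one_of_pos (div_pos (hspos y) (hq i y))
    have h2 := mul_le_mul_of_nonneg_left h1 (hq i y).le
    calc q i y * Real.log (s y / q i y) ≤ q i y * (s y / q i y - 1) := h2
      _ = s y - q i y := by
          rw [mul_sub, mul_one, mul_comm, div_mul_cancel₀ _ (hq i y).ne']
  have hstrict : q i x * Real.log (s x / q i x) < s x - q i x := by
    have hne1 : s x / q i x ≠ 1 :=
      fun h => hne (((div_eq_one_iff_eq (hq i x).ne').mp h).symm)
    have h1 := Real.log_lt_sub_one_of_pos (div_pos (hspos x) (hq i x)) hne1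
    have h2 := mul_lt_mul_of_pos_left h1 (hq i x)
    calc q i x * Real.log (s x / q i x) < q i x * (s x / q i x - 1) := h2
      _ = s x - q i x := by
          rw [mul_sub, mul_one, mul_comm, div_mul_cancel₀ _ (hq i x).ne']
  have hsum_lt : (∑ y, q i y * Real.log (s y / q i y)) < ∑ y, (s y - q i y) :=
    Finset.sum_lt_sum (fun y _ => hterm y) ⟨x, Finset.mem_univ x, hstrict⟩
  have hzero : (∑ y, (s y - q i y)) = 0 := by
    rw [Finset.sum_sub_distrib, hssum, hqsum i]; ring
  have hflip : (∑ y, q i y * Real.log (s y / q i y))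
      = -(∑ y, q i y * Real.log (q i y / s y)) := by
    rw [← Finset.sum_neg_distrib]
    apply Finset.sum_congr rfl
    intro y _
    rw [Real.log_div (hspos y).ne' (hq i y).ne', Real.log_div (hq i y).ne' (hspos y).ne']
    ring
  rw [hzero, hflip] at hsum_lt
  linarith
end

section
/- Let S and A = Π_{i=1}^N A_i be nonempty finite sets, T ≥ 0, P(·|s,a) a PMF on S for each (s,a), and suppose the reward decomposes as r(s,a) = Σ_{i=1}^N r_i(s,a) and the policy is a product π_t(a|s) = Π_{i=1}^N q_{i,t}(a_i|s) with each q_{i,t}(·|s) a strictly positive PMF on A_i. Define per-agent functions by backward recursion: V_{i,T+1}(s) = 0; Q_{i,t}(s,a) = r_i(s,a) + Σ_{s'} P(s'|s,a)·V_{i,t+1}(s'); V_{i,t}(s) = Σ_a π_t(a|s)·( Q_{i,t}(s,a) − log q_{i,t}(a_i|s) ); and joint functions by V_{T+1}(s) = 0; Q_t(s,a) = r(s,a) + Σ_{s'} P(s'|s,a)·V_{t+1}(s'); V_t(s) = Σ_a π_t(a|s)·( Q_t(s,a) − log π_t(a|s) ). Then for all t, s, a: V_t(s) = Σ_{i=1}^N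 V_{i,t}(s) and Q_t(s,a) = Σ_{i=1}^N Q_{i,t}(s,a). -/
/-- If the reward decomposes as `r = ∑_i r_i` and the policy is a
product `π_t(a|s) = ∏_i q_{i,t}(a_i|s)` of strictly positive PMFs, then the soft value
and soft Q functions defined by backward recursion decompose into the per-agent ones:
`V_t = ∑_i V_{i,t}` and `Q_t = ∑_i Q_{i,t}`. -/
theorem soft_value_decomposition {S : Type*} [Fintype S] [Nonempty S]
    {N : ℕ} (A : Fin N → Type*) [∀ i, Fintype (A i)] [∀ i, Nonempty (A i)] (T : ℕ)
    (P : S → (∀ i, A i) → S → ℝ) (hP0 : ∀ s a s', 0 ≤ P s a s')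
    (hPsum : ∀ s a, ∑ s', P s a s' = 1)
    (r : Fin N → S → (∀ i, A i) → ℝ)
    (q : ∀ i : Fin N, Fin (T + 1) → S → A i → ℝ)
    (hq : ∀ i t s x, 0 < q i t s x) (hqsum : ∀ i t s, ∑ x, q i t s x = 1)
    -- per-agent backward recursion
    (Vi : Fin N → Fin (T + 2) → S → ℝ) (Qi : Fin N → Fin (T + 1) → S → (∀ i, A i) → ℝ)
    (hVilast : ∀ i s, Vi i (Fin.last (T + 1)) s = 0)
    (hQi : ∀ i (t : Fin (T + 1)) s a,
      Qi i t s a = r i s a + ∑ s', P s a s' * Vi i t.succ s')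
    (hVi : ∀ i (t : Fin (T + 1)) s, Vi i t.castSucc s =
      ∑ a : ∀ j, A j, (∏ j, q j t s (a j)) * (Qi i t s a - Real.log (q i t s (a i))))
    -- joint backward recursion
    (V : Fin (T + 2) → S → ℝ) (Qf : Fin (T + 1) → S → (∀ i, A i) → ℝ)
    (hVlast : ∀ s, V (Fin.last (T + 1)) s = 0)
    (hQ : ∀ (t : Fin (T + 1)) s a,
      Qf t s a = (∑ i, r i s a) + ∑ s', P s a s' * V t.succ s')
    (hV : ∀ (t : Fin (T + 1)) s, V t.castSucc s =
      ∑ a : ∀ j, A j, (∏ j, q j t s (a j)) *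
        (Qf t s a - Real.log (∏ j, q j t s (a j)))) :
    (∀ (t : Fin (T + 2)) (s : S), V t s = ∑ i, Vi i t s) ∧
    (∀ (t : Fin (T + 1)) (s : S) (a : ∀ j, A j), Qf t s a = ∑ i, Qi i t s a) := by
  -- Q decomposition follows from V decomposition at the next step
  have QfromV : ∀ (t : Fin (T + 1)), (∀ s, V t.succ s = ∑ i, Vi i t.succ s) →
      ∀ s a, Qf t s a = ∑ i, Qi i t s a := by
    intro t hVt s a
    rw [hQ]
    simp only [hVt]
    rw [show (∑ s', P s a s' * ∑ i, Vi i t.succ s') =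
        ∑ i, ∑ s', P s a s' * Vi i t.succ s' by
      rw [Finset.sum_comm]
      exact Finset.sum_congr rfl fun s' _ => Finset.mul_sum _ _ _]
    rw [← Finset.sum_add_distrib]
    exact Finset.sum_congr rfl fun i _ => (hQi i t s a).symm
  -- V decomposition from Q decomposition at the same step
  have VfromQ : ∀ (t : Fin (T + 1)), (∀ s a, Qf t s a = ∑ i, Qi i t s a) →
      ∀ s, V t.castSucc s = ∑ i, Vi i t.castSucc s := by
    intro t hQt s
    rw [hV]
    have : ∀ a : ∀ j, A j,
        (∏ j, q j t s (a j)) * (Qf t s a - Real.log (∏ j, q j t s (a j))) =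
        ∑ i, (∏ j, q j t s (a j)) * (Qi i t s a - Real.log (q i t s (a i))) := by
      intro a
      rw [hQt, Real.log_prod (fun j _ => (hq j t s (a j)).ne'),
        ← Finset.sum_sub_distrib, Finset.mul_sum]
    simp only [this]
    rw [Finset.sum_comm]
    exact Finset.sum_congr rfl fun i _ => (hVi i t s).symm
  -- downward induction
  have key : ∀ m : ℕ, ∀ (t : Fin (T + 2)), (t : ℕ) = T + 1 - m →
      ∀ s, V t s = ∑ i, Vi i t s := by
    intro m
    induction m with
    | zero =>
      intro t ht s
      have : t = Fin.last (T + 1) := Fin.ext (by simpa using ht)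
      subst this
      rw [hVlast]
      exact (Finset.sum_eq_zero fun i _ => hVilast i s).symm
    | succ m ih =>
      intro t ht s
      by_cases hm : m ≤ T
      · have htv : (t : ℕ) = T - m := by omega
        have hlt : (t : ℕ) < T + 1 := by omega
        set u : Fin (T + 1) := ⟨t, hlt⟩ with hu
        have htc : t = u.castSucc := Fin.ext rfl
        have husucc : ((u.succ : Fin (T + 2)) : ℕ) = T + 1 - m := by
          show (t : ℕ) + 1 = T + 1 - m; omega
        rw [htc]
        exact VfromQ u (QfromV u (ih u.succ husucc)) s
      · have : (t : ℕ) = T + 1 - m := by omega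
        exact ih t this s
  have hVall : ∀ (t : Fin (T + 2)) (s : S), V t s = ∑ i, Vi i t s := by
    intro t s
    exact key (T + 1 - t) t (by omega) s
  exact ⟨hVall, fun t s a => QfromV t (fun s' => hVall t.succ s') s a⟩
end
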